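/- Let M(z) solve −M(z)^{−1} = z − H₀ + λ²⟨M(z)⟩ with Im M(z)·Im z > 0 for Im z > 0. Then the derivative of m(z) := ⟨M(z)⟩ satisfies m′(z) = ⟨M(z)²⟩ / (1 − λ²⟨M(z)²⟩), and |1 − λ²⟨M(z)²⟩| ≥ 2λ²⟨(Im M(z))²⟩, so that |m′(z)| ≤ 1/(2λ⁴⟨(Im M(z))²⟩). -/

import Mathlib

open Matrix
open scoped ComplexOrder

lemma sc_normSq_sub_conj (u v : ℂ) :
    Complex.normSq (u - (starRingEnd ℂ) v) =
      Complex.normSq u + Complex.normSq v - 2 * (u * v).re := by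
  simp [Complex.normSq_apply, Complex.sub_re, Complex.sub_im, Complex.mul_re]
  ring

lemma sc_half (w : ℂ) : ((2 : ℂ) * Complex.I)⁻¹ * (w - (starRingEnd ℂ) w) = (w.im : ℂ) := by
  rw [Complex.sub_conj]
  have hI : Complex.I ≠ 0 := Complex.I_ne_zero
  field_simp
  push_cast
  ring

lemma sc_normSq_twoI (w : ℂ) :
    Complex.normSq (((2 : ℂ) * Complex.I)⁻¹ * w) = Complex.normSq w / 4 := by
  rw [Complex.normSq_mul]
  norm_num [Complex.normSq_apply]
  ring

lemma trace_mul_eq {N : ℕ} (A B : Matrix (Fin N) (Fin N) ℂ) :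
    (A * B).trace = ∑ i, ∑ j, A i j * B j i := by
  simp [Matrix.trace, Matrix.mul_apply, Matrix.diag]

lemma trace_mul_conjT {N : ℕ} (A : Matrix (Fin N) (Fin N) ℂ) :
    (A * Aᴴ).trace = ((∑ i, ∑ j, Complex.normSq (A i j) : ℝ) : ℂ) := by
  rw [trace_mul_eq]
  push_cast
  refine Finset.sum_congr rfl fun i _ => Finset.sum_congr rfl fun j _ => ?_
  rw [Matrix.conjTranspose_apply]
  exact Complex.mul_conj _

lemma S_herm {N : ℕ} (A : Matrix (Fin N) (Fin N) ℂ) :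
    (((2 : ℂ) * Complex.I)⁻¹ • (A - Aᴴ))ᴴ = ((2 : ℂ) * Complex.I)⁻¹ • (A - Aᴴ) := by
  have hst : star (((2 : ℂ) * Complex.I)⁻¹) = -((2 : ℂ) * Complex.I)⁻¹ := by
    simp [mul_inv, Complex.inv_I]
  rw [Matrix.conjTranspose_smul, Matrix.conjTranspose_sub, Matrix.conjTranspose_conjTranspose,
    hst, neg_smul, ← smul_neg, neg_sub]

lemma trace_sq_herm {N : ℕ} (B : Matrix (Fin N) (Fin N) ℂ) (hB : Bᴴ = B) :
    (B * B).trace = ((∑ i, ∑ j, Complex.normSq (B i j) : ℝ) : ℂ) := by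
  rw [trace_mul_eq]
  push_cast
  refine Finset.sum_congr rfl fun i _ => Finset.sum_congr rfl fun j _ => ?_
  have : B j i = star (B i j) := by
    conv_lhs => rw [← hB, Matrix.conjTranspose_apply]
  rw [this]
  exact Complex.mul_conj _

lemma S_normSq_sum {N : ℕ} (A : Matrix (Fin N) (Fin N) ℂ) :
    ∑ i, ∑ j, Complex.normSq ((((2 : ℂ) * Complex.I)⁻¹ • (A - Aᴴ)) i j) =
      ((∑ i, ∑ j, Complex.normSq (A i j)) - ((A * A).trace).re) / 2 := by
  have hre : ((A * A).trace).re = ∑ i, ∑ j, (A i j * A j i).re := by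
    rw [trace_mul_eq]
    simp [Complex.re_sum]
  have hsym : ∑ i, ∑ j, Complex.normSq (A j i) = ∑ i, ∑ j, Complex.normSq (A i j) :=
    Finset.sum_comm
  have hterm : ∀ i j, Complex.normSq ((((2 : ℂ) * Complex.I)⁻¹ • (A - Aᴴ)) i j) =
      (Complex.normSq (A i j) + Complex.normSq (A j i) - 2 * (A i j * A j i).re) / 4 := by
    intro i j
    rw [Matrix.smul_apply, smul_eq_mul, sc_normSq_twoI, Matrix.sub_apply,
      Matrix.conjTranspose_apply]
    rw [show (star (A j i) : ℂ) = (starRingEnd ℂ) (A j i) from rfl, sc_normSq_sub_conj]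
  simp only [hterm]
  have expand : ∑ i, ∑ j, (Complex.normSq (A i j) + Complex.normSq (A j i)
        - 2 * (A i j * A j i).re) / 4
      = ((∑ i, ∑ j, Complex.normSq (A i j)) + (∑ i, ∑ j, Complex.normSq (A j i))
        - 2 * (∑ i, ∑ j, (A i j * A j i).re)) / 4 := by
    simp only [← Finset.sum_div, Finset.sum_sub_distrib, Finset.sum_add_distrib, ← Finset.mul_sum]
  rw [expand, hsym, hre]
  ring

lemma abs_trace_sq_le {N : ℕ} (A : Matrix (Fin N) (Fin N) ℂ) :
    ‖(A * A).trace‖ ≤ ∑ i, ∑ j, Complex.normSq (A i j) := by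
  rw [trace_mul_eq]
  refine le_trans ((norm_sum_le _ _).trans
    (Finset.sum_le_sum fun i _ => norm_sum_le _ _)) ?_
  have hterm : ∀ i j : Fin N, ‖A i j * A j i‖ ≤
      (Complex.normSq (A i j) + Complex.normSq (A j i)) / 2 := by
    intro i j
    rw [norm_mul, ← Complex.sq_norm, ← Complex.sq_norm]
    nlinarith [sq_nonneg (‖A i j‖ - ‖A j i‖),
      norm_nonneg (A i j), norm_nonneg (A j i)]
  refine le_trans (Finset.sum_le_sum fun i _ => Finset.sum_le_sum fun j _ => hterm i j) ?_
  have hsym : ∑ i, ∑ j, Complex.normSq (A j i) = ∑ i, ∑ j, Complex.normSq (A i j) :=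
    Finset.sum_comm
  simp only [← Finset.sum_div, Finset.sum_add_distrib]
  rw [hsym]
  ring_nf
  exact le_refl _

lemma aux_deriv {N : ℕ} (H₀ : Matrix (Fin N) (Fin N) ℂ) (f : ℂ → ℂ) (z c : ℂ)
    (hf : HasDerivAt f c z)
    (hu : IsUnit (H₀ - f z • (1 : Matrix (Fin N) (Fin N) ℂ))) :
    HasDerivAt (fun w => (Ring.inverse (H₀ - f w • (1 : Matrix (Fin N) (Fin N) ℂ))).trace)
      (c * ((H₀ - f z • 1 : Matrix (Fin N) (Fin N) ℂ)⁻¹ *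
            (H₀ - f z • 1 : Matrix (Fin N) (Fin N) ℂ)⁻¹).trace) z := by
  letI : NormedRing (Matrix (Fin N) (Fin N) ℂ) := Matrix.linftyOpNormedRing
  letI : NormedAlgebra ℂ (Matrix (Fin N) (Fin N) ℂ) := Matrix.linftyOpNormedAlgebra
  set X := H₀ - f z • (1 : Matrix (Fin N) (Fin N) ℂ) with hX
  have hG : HasDerivAt (fun w => H₀ - f w • (1 : Matrix (Fin N) (Fin N) ℂ))
      (-(c • 1)) z := by
    exact ((hasDerivAt_const z H₀).sub (hf.smul_const (1 : Matrix (Fin N) (Fin N) ℂ))).congr_deriv (zero_sub _)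
  have hcu : ((hu.unit⁻¹ : (Matrix (Fin N) (Fin N) ℂ)ˣ) : Matrix (Fin N) (Fin N) ℂ) = X⁻¹ := by
    rw [Matrix.coe_units_inv, hu.unit_spec]
  have hinv : HasDerivAt (fun w => Ring.inverse (H₀ - f w • (1 : Matrix (Fin N) (Fin N) ℂ)))
      (c • (X⁻¹ * X⁻¹)) z := by
    have h0 := hasFDerivAt_ringInverse (𝕜 := ℂ) hu.unit
    rw [hu.unit_spec] at h0
    have h1 := h0.comp_hasDerivAt z hG
    have h2 : (Ring.inverse ∘ fun w => H₀ - f w • (1 : Matrix (Fin N) (Fin N) ℂ))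
        = fun w => Ring.inverse (H₀ - f w • (1 : Matrix (Fin N) (Fin N) ℂ)) := rfl
    rw [h2] at h1
    refine h1.congr_deriv ?_
    rw [ContinuousLinearMap.neg_apply, ContinuousLinearMap.mulLeftRight_apply, hcu]
    rw [Matrix.mul_neg, Matrix.neg_mul, neg_neg, Matrix.mul_smul, Matrix.mul_one, Matrix.smul_mul]
  have htr := ((Matrix.traceLinearMap (Fin N) ℂ ℂ).toContinuousLinearMap.hasFDerivAt).comp_hasDerivAt z hinv
  exact htr.congr_deriv (show Matrix.trace (c • (X⁻¹ * X⁻¹)) = _ by rw [Matrix.trace_smul, smul_eq_mul])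

set_option maxHeartbeats 2000000


/-- If `M(z)` solves the matrix Dyson equation `−M(z)⁻¹ = z − H₀ + λ²⟨M(z)⟩` with
`Im M(z)` positive definite throughout the upper half-plane, and `m(z) := ⟨M(z)⟩` has
derivative `m′` at a point `z` with `Im z > 0`, then
`m′ = ⟨M²⟩/(1 − λ²⟨M²⟩)`, `|1 − λ²⟨M²⟩| ≥ 2λ²⟨(Im M)²⟩`, and hence
`|m′| ≤ 1/(2λ⁴⟨(Im M)²⟩)`. -/
theorem statement11 (N : ℕ) (hN : 0 < N) (H₀ : Matrix (Fin N) (Fin N) ℂ)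
    (hH₀ : H₀.IsHermitian) (lam : ℝ) (hlam : 0 < lam)
    (M : ℂ → Matrix (Fin N) (Fin N) ℂ)
    (hMinv : ∀ w : ℂ, 0 < w.im → IsUnit (M w).det)
    (hMDE : ∀ w : ℂ, 0 < w.im →
      -(M w)⁻¹ = w • (1 : Matrix (Fin N) (Fin N) ℂ) - H₀ +
        (((lam : ℂ) ^ 2) * ((N : ℂ)⁻¹ * (M w).trace)) • (1 : Matrix (Fin N) (Fin N) ℂ))
    (hImM : ∀ w : ℂ, 0 < w.im → (((2 : ℂ) * Complex.I)⁻¹ • (M w - (M w)ᴴ)).PosDef)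
    (z : ℂ) (hz : 0 < z.im) (m' : ℂ)
    (hm' : HasDerivAt (fun w => (N : ℂ)⁻¹ * (M w).trace) m' z) :
    m' = ((N : ℂ)⁻¹ * (M z * M z).trace) / (1 - (lam : ℂ) ^ 2 * ((N : ℂ)⁻¹ * (M z * M z).trace)) ∧
    2 * lam ^ 2 * ((N : ℝ)⁻¹ *
        (((((2 : ℂ) * Complex.I)⁻¹ • (M z - (M z)ᴴ)) *
          (((2 : ℂ) * Complex.I)⁻¹ • (M z - (M z)ᴴ))).trace).re) ≤
      ‖(1 - (lam : ℂ) ^ 2 * ((N : ℂ)⁻¹ * (M z * M z).trace))‖ ∧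
    ‖m'‖ ≤
      1 / (2 * lam ^ 4 * ((N : ℝ)⁻¹ *
        (((((2 : ℂ) * Complex.I)⁻¹ • (M z - (M z)ᴴ)) *
          (((2 : ℂ) * Complex.I)⁻¹ • (M z - (M z)ᴴ))).trace).re)) := by
  have hNR : (0:ℝ) < (N:ℝ) := by exact_mod_cast hN
  set A := M z with hA
  have hdet : IsUnit A.det := hMinv z hz
  set S : Matrix (Fin N) (Fin N) ℂ := ((2:ℂ)*Complex.I)⁻¹ • (A - Aᴴ) with hSdef
  have hSpd : S.PosDef := hImM z hz
  have hinvw : ∀ w : ℂ, 0 < w.im → (M w)⁻¹ =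
      H₀ - (w + (lam:ℂ)^2 * ((N:ℂ)⁻¹ * (M w).trace)) • (1 : Matrix (Fin N) (Fin N) ℂ) := by
    intro w hw
    have h2 : (M w)⁻¹ = -(w • (1 : Matrix (Fin N) (Fin N) ℂ) - H₀ +
        ((lam:ℂ)^2 * ((N:ℂ)⁻¹ * (M w).trace)) • 1) := neg_eq_iff_eq_neg.mp (hMDE w hw)
    rw [h2, add_smul]
    abel
  set d : ℂ := z + (lam:ℂ)^2 * ((N:ℂ)⁻¹ * A.trace) with hd
  have hAinv : A⁻¹ = H₀ - d • 1 := hinvw z hz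
  have hdetH : IsUnit Aᴴ.det := by rw [Matrix.det_conjTranspose]; exact hdet.star
  have hAHinv : (Aᴴ)⁻¹ = H₀ - ((starRingEnd ℂ) d) • 1 := by
    rw [← Matrix.conjTranspose_nonsing_inv, hAinv, Matrix.conjTranspose_sub,
      Matrix.conjTranspose_smul, Matrix.conjTranspose_one, hH₀.eq]
    rfl
  have hsub : A⁻¹ - (Aᴴ)⁻¹ = ((starRingEnd ℂ) d - d) • (1 : Matrix (Fin N) (Fin N) ℂ) := by
    rw [hAinv, hAHinv, sub_smul]
    abel
  have hkey : Aᴴ - A = ((starRingEnd ℂ) d - d) • (Aᴴ * A) := by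
    have h1 : Aᴴ * (A⁻¹ - (Aᴴ)⁻¹) * A = Aᴴ - A := by
      rw [Matrix.mul_sub, Matrix.sub_mul, Matrix.mul_nonsing_inv Aᴴ hdetH,
        Matrix.mul_assoc Aᴴ A⁻¹ A, Matrix.nonsing_inv_mul A hdet, Matrix.mul_one,
        Matrix.one_mul]
    rw [← h1, hsub, Matrix.mul_smul, Matrix.mul_one, Matrix.smul_mul]
  set t : ℝ := z.im + lam^2 * ((N:ℝ)⁻¹ * (A.trace).im) with ht
  have hdim : d.im = t := by
    have e1 : ((lam:ℂ)^2) = (((lam^2 : ℝ)) : ℂ) := by push_cast; ring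
    have e2 : ((N:ℂ))⁻¹ = (((N:ℝ)⁻¹ : ℝ) : ℂ) := by push_cast; ring
    rw [hd, e1, e2]
    simp only [Complex.add_im, Complex.im_ofReal_mul]
    rfl
  have hSP : S = ((t:ℝ):ℂ) • (Aᴴ * A) := by
    have h2 : A - Aᴴ = (d - (starRingEnd ℂ) d) • (Aᴴ * A) := by
      rw [← neg_sub Aᴴ A, hkey, ← neg_smul, neg_sub]
    rw [hSdef, h2, smul_smul]
    congr 1
    exact (sc_half d).trans (by rw [hdim])
  set p : ℝ := ∑ i, ∑ j, Complex.normSq (A i j) with hp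
  have hPtr : (Aᴴ * A).trace = (p:ℂ) := by rw [Matrix.trace_mul_comm, trace_mul_conjT]
  have hStr : S.trace = (((A.trace).im : ℝ) : ℂ) := by
    rw [hSdef, Matrix.trace_smul, Matrix.trace_sub, Matrix.trace_conjTranspose, smul_eq_mul]
    exact sc_half A.trace
  have hsq : (A.trace).im = t * p := by
    have h3 := congrArg Matrix.trace hSP
    rw [hStr, Matrix.trace_smul, hPtr, smul_eq_mul] at h3
    exact_mod_cast h3
  have hdiag : ∀ i : Fin N, (0:ℂ) < S i i := by
    intro i
    have hx : (Pi.single i 1 : Fin N → ℂ) ≠ 0 := by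
      intro hcon
      have := congrFun hcon i
      simp at this
    have h4 := hSpd.dotProduct_mulVec_pos hx
    simpa [Matrix.mulVec, dotProduct, Pi.single_apply, Finset.sum_ite_eq] using h4
  have htrpos : (0:ℂ) < S.trace := by
    rw [Matrix.trace]
    exact Finset.sum_pos (fun i _ => hdiag i) ⟨⟨0, hN⟩, Finset.mem_univ _⟩
  have hspos : 0 < (A.trace).im := by
    rw [hStr] at htrpos
    exact_mod_cast htrpos
  have htpos : 0 < t := by
    have h5 : 0 < lam^2 * ((N:ℝ)⁻¹ * (A.trace).im) :=
      mul_pos (pow_pos hlam 2) (mul_pos (inv_pos.mpr hNR) hspos)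
    rw [ht]; linarith
  have hppos : 0 < p := by nlinarith [hsq, hspos, htpos]
  have hpNle : lam^2 * ((N:ℝ)⁻¹ * p) < 1 := by
    have hsN : (N:ℝ)⁻¹ * (A.trace).im = t * ((N:ℝ)⁻¹ * p) := by rw [hsq]; ring
    have h6 : 0 < (N:ℝ)⁻¹ * (A.trace).im := mul_pos (inv_pos.mpr hNR) hspos
    have h7 : 0 < (N:ℝ)⁻¹ * p := mul_pos (inv_pos.mpr hNR) hppos
    nlinarith [hsN, h6, h7, hz, ht]
  set σ : ℝ := ∑ i, ∑ j, Complex.normSq (S i j) with hσ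
  have hSS : (S*S).trace = (σ:ℂ) := trace_sq_herm S (by rw [hSdef]; exact S_herm A)
  have hσeq : σ = (p - ((A*A).trace).re)/2 := by
    rw [hσ, hSdef, hp]
    exact S_normSq_sum A
  have hσpos : 0 < σ := by
    have h00 : (0:ℝ) < Complex.normSq (S ⟨0, hN⟩ ⟨0, hN⟩) :=
      Complex.normSq_pos.mpr (hdiag ⟨0, hN⟩).ne'
    refine Finset.sum_pos' (fun i _ => Finset.sum_nonneg fun j _ => Complex.normSq_nonneg _)
      ⟨⟨0, hN⟩, Finset.mem_univ _,
        Finset.sum_pos' (fun j _ => Complex.normSq_nonneg _)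
          ⟨⟨0, hN⟩, Finset.mem_univ _, h00⟩⟩
  set q : ℂ := (N:ℂ)⁻¹ * (A*A).trace with hq
  have hqre : ((1:ℂ) - (lam:ℂ)^2 * q).re = 1 - lam^2 * ((N:ℝ)⁻¹ * ((A*A).trace).re) := by
    have e1 : ((lam:ℂ)^2) = (((lam^2 : ℝ)) : ℂ) := by push_cast; ring
    have e2 : ((N:ℂ))⁻¹ = (((N:ℝ)⁻¹ : ℝ) : ℂ) := by push_cast; ring
    rw [hq, e1, e2, Complex.sub_re, Complex.one_re, ← mul_assoc, ← Complex.ofReal_mul]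
    rw [Complex.re_ofReal_mul]
    ring
  have hSSre : ((S*S).trace).re = σ := by rw [hSS, Complex.ofReal_re]
  have habs_ge : 2 * lam^2 * ((N:ℝ)⁻¹ * ((S*S).trace).re) ≤
      ‖(1 - (lam:ℂ)^2 * q)‖ := by
    refine le_trans ?_ (Complex.re_le_norm _)
    rw [hqre, hSSre]
    have h8 : ((A*A).trace).re = p - 2*σ := by rw [hσeq]; ring
    rw [h8]
    have h9 : 0 ≤ (N:ℝ)⁻¹ := (inv_pos.mpr hNR).le
    nlinarith [hpNle]
  have hvpos : 0 < (N:ℝ)⁻¹ * ((S*S).trace).re := by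
    rw [hSSre]; exact mul_pos (inv_pos.mpr hNR) hσpos
  have hne : (1:ℂ) - (lam:ℂ)^2 * q ≠ 0 := by
    intro hcon
    rw [hcon] at habs_ge
    simp only [norm_zero] at habs_ge
    nlinarith [hvpos, pow_pos hlam 2]
  -- derivative part
  set f : ℂ → ℂ := fun w => w + (lam:ℂ)^2 * ((N:ℂ)⁻¹ * (M w).trace) with hf
  have hfd : HasDerivAt f (1 + (lam:ℂ)^2 * m') z :=
    (hasDerivAt_id z).add (HasDerivAt.const_mul ((lam:ℂ)^2) hm')
  have hfz : f z = d := rfl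
  have huz : IsUnit (H₀ - f z • (1 : Matrix (Fin N) (Fin N) ℂ)) := by
    rw [hfz, ← hAinv, Matrix.isUnit_iff_isUnit_det]
    exact Matrix.isUnit_nonsing_inv_det A hdet
  have hder := aux_deriv H₀ f z (1 + (lam:ℂ)^2 * m') hfd huz
  have hval : (H₀ - f z • 1 : Matrix (Fin N) (Fin N) ℂ)⁻¹ = A := by
    rw [hfz, ← hAinv, Matrix.nonsing_inv_nonsing_inv A hdet]
  rw [hval] at hder
  have hder2 := hder.const_mul ((N:ℂ)⁻¹)
  have hopen : ∀ᶠ w in nhds z, 0 < w.im :=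
    (isOpen_lt continuous_const Complex.continuous_im).eventually_mem hz
  have heq : (fun w => (N:ℂ)⁻¹ * (Ring.inverse (H₀ - f w • (1 : Matrix (Fin N) (Fin N) ℂ))).trace)
      =ᶠ[nhds z] (fun w => (N:ℂ)⁻¹ * (M w).trace) := by
    filter_upwards [hopen] with w hw
    have h1 := hinvw w hw
    rw [← h1, ← Matrix.nonsing_inv_eq_ringInverse,
      Matrix.nonsing_inv_nonsing_inv (M w) (hMinv w hw)]
  have hEq : m' = (1 + (lam:ℂ)^2 * m') * q := by
    have h10 := hder2.congr_of_eventuallyEq heq.symm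
    have h11 := hm'.unique h10
    rw [hq]
    linear_combination h11
  have hmq : m' * (1 - (lam:ℂ)^2 * q) = q := by linear_combination hEq
  have hm'eq : m' = q / (1 - (lam:ℂ)^2 * q) := by
    rw [eq_div_iff hne]; exact hmq
  refine ⟨hm'eq, habs_ge, ?_⟩
  -- third claim
  have habsq : ‖q‖ ≤ (N:ℝ)⁻¹ * p := by
    rw [hq, norm_mul, norm_inv]
    have : ‖(N:ℂ)‖ = (N:ℝ) := by
      rw [show ((N:ℂ)) = (((N:ℝ)):ℂ) by push_cast; ring, Complex.norm_real, Real.norm_eq_abs, abs_of_pos hNR]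
    rw [this]
    exact mul_le_mul_of_nonneg_left (abs_trace_sq_le A) (inv_pos.mpr hNR).le
  have hpNle' : (N:ℝ)⁻¹ * p ≤ 1 / lam^2 := by
    rw [le_div_iff₀ (pow_pos hlam 2)]
    nlinarith [hpNle]
  set v : ℝ := (N:ℝ)⁻¹ * ((S*S).trace).re with hv
  have h2v : 0 < 2 * lam^2 * v := by positivity
  calc ‖m'‖ = ‖q‖ / ‖(1 - (lam:ℂ)^2 * q)‖ := by
        rw [hm'eq, norm_div]
    _ ≤ (1/lam^2) / (2 * lam^2 * v) := by
        refine div_le_div₀ (by positivity) (habsq.trans hpNle') h2v habs_ge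
    _ = 1 / (2 * lam^4 * v) := by
        field_simp
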